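/- Let α,β,γ ∈ [0,1/2]. Then for all signs ±,±' ∈ {+1,−1}, all τ,λ ∈ ℝ and all nonzero ξ,η ∈ ℝ^3, the angle θ(±ξ,±'η) between ±ξ and ±'η satisfies θ(±ξ,±'η) ≲ (⟨|τ+λ|−|ξ+η|⟩/min(⟨ξ⟩,⟨η⟩))^α + (⟨−τ±|ξ|⟩/min(⟨ξ⟩,⟨η⟩))^β + (⟨−λ±'|η|⟩/min(⟨ξ⟩,⟨η⟩))^γ. -/

import Mathlib

/- STATEMENT 15: angle estimate: for α,β,γ ∈ [0,1/2], signs ±,±′, τ,λ ∈ ℝ, nonzero ξ,η ∈ ℝ³: θ(±ξ,±′η) ≲ (⟨|τ+λ|-|ξ+η|⟩/min(⟨ξ⟩,⟨η⟩))^α + (⟨-τ±|ξ|⟩/min(⟨ξ⟩,⟨η⟩))^β + (⟨-λ±′|η|⟩/min(⟨ξ⟩,⟨η⟩))^γ. -/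

noncomputable section

open InnerProductGeometry

open scoped RealInnerProductSpace

/-- ℝ³ as a Euclidean space. -/
abbrev E3 : Type := EuclideanSpace ℝ (Fin 3)

/-- The Japanese bracket ⟨ξ⟩ = (1+|ξ|²)^{1/2}. -/
def jb (ξ : E3) : ℝ := Real.sqrt (1 + ‖ξ‖ ^ 2)

/-- The Japanese bracket ⟨r⟩ = (1+r²)^{1/2} of a real number. -/
def jbR (r : ℝ) : ℝ := Real.sqrt (1 + r ^ 2)

lemma one_le_jbR (r : ℝ) : 1 ≤ jbR r := by
  have h := Real.sqrt_le_sqrt (show (1:ℝ) ≤ 1 + r ^ 2 by nlinarith [sq_nonneg r])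
  simpa [jbR] using h

lemma abs_le_jbR (r : ℝ) : |r| ≤ jbR r := by
  rw [jbR, ← Real.sqrt_sq_eq_abs]
  exact Real.sqrt_le_sqrt (by nlinarith)

lemma one_le_jb (ξ : E3) : 1 ≤ jb ξ := one_le_jbR ‖ξ‖

lemma jb_le (ξ : E3) : jb ξ ≤ 1 + ‖ξ‖ := by
  rw [jb, show (1:ℝ) + ‖ξ‖ = Real.sqrt ((1 + ‖ξ‖)^2) by
    rw [Real.sqrt_sq (by positivity)]]
  exact Real.sqrt_le_sqrt (by nlinarith [norm_nonneg ξ])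

lemma my_sqrt_add (a b : ℝ) (ha : 0 ≤ a) (hb : 0 ≤ b) :
    Real.sqrt (a + b) ≤ Real.sqrt a + Real.sqrt b := by
  have ha2 : Real.sqrt a ^ 2 = a := Real.sq_sqrt ha
  have hb2 : Real.sqrt b ^ 2 = b := Real.sq_sqrt hb
  have hprod : 0 ≤ Real.sqrt a * Real.sqrt b :=
    mul_nonneg (Real.sqrt_nonneg a) (Real.sqrt_nonneg b)
  have h : Real.sqrt (a + b) ≤ Real.sqrt ((Real.sqrt a + Real.sqrt b) ^ 2) :=
    Real.sqrt_le_sqrt (by nlinarith)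
  rwa [Real.sqrt_sq (by positivity)] at h

/-- Half-power lower bound: if x ≥ 1/2 and 0 ≤ e ≤ 1/2 then x^e ≥ 1/2. -/
lemma half_le_rpow {x e : ℝ} (hx : 1/2 ≤ x) (he0 : 0 ≤ e) (he1 : e ≤ 1/2) :
    1/2 ≤ x ^ e := by
  rcases le_total 1 x with h1 | h1
  · linarith [Real.one_le_rpow h1 he0]
  · have h2 : x ^ (1/2 : ℝ) ≤ x ^ e :=
      Real.rpow_le_rpow_of_exponent_ge (by linarith) h1 he1
    have h3 : ((1:ℝ)/2) ^ (1/2 : ℝ) ≤ x ^ (1/2 : ℝ) :=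
      Real.rpow_le_rpow (by norm_num) hx (by norm_num)
    have h4 : (1:ℝ)/2 ≤ ((1:ℝ)/2) ^ (1/2 : ℝ) := by
      rw [← Real.sqrt_eq_rpow]
      nlinarith [Real.sq_sqrt (show (0:ℝ) ≤ 1/2 by norm_num),
        Real.sqrt_nonneg ((1:ℝ)/2)]
    linarith

set_option maxHeartbeats 1000000 in
/-- Main geometric inequality. -/
lemma key_geom (s₁ s₂ : ℝ) (hs₁ : s₁ = 1 ∨ s₁ = -1) (hs₂ : s₂ = 1 ∨ s₂ = -1)
    (τ lam : ℝ) (ξ η : E3) (hξ : ξ ≠ 0) (hη : η ≠ 0) :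
    ‖ξ‖ * ‖η‖ * (1 - Real.cos (angle (s₁ • ξ) (s₂ • η))) ≤
      (‖ξ‖ + ‖η‖) * (|(|τ + lam| - ‖ξ + η‖)| + |(-τ + s₁ * ‖ξ‖)| + |(-lam + s₂ * ‖η‖)|) := by
  have hn1 : (0:ℝ) < ‖ξ‖ := norm_pos_iff.mpr hξ
  have hn2 : (0:ℝ) < ‖η‖ := norm_pos_iff.mpr hη
  have hn1' : ‖ξ‖ ≠ 0 := hn1.ne'
  have hn2' : ‖η‖ ≠ 0 := hn2.ne'
  have hns1 : ‖s₁ • ξ‖ = ‖ξ‖ := by rcases hs₁ with h | h <;> simp [h, norm_smul]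
  have hns2 : ‖s₂ • η‖ = ‖η‖ := by rcases hs₂ with h | h <;> simp [h, norm_smul]
  have hip : ⟪s₁ • ξ, s₂ • η⟫ = s₁ * s₂ * ⟪ξ, η⟫ := by
    rw [real_inner_smul_left, real_inner_smul_right]; ring
  have hLHS : ‖ξ‖ * ‖η‖ * (1 - Real.cos (angle (s₁ • ξ) (s₂ • η))) =
      ‖ξ‖ * ‖η‖ - s₁ * s₂ * ⟪ξ, η⟫ := by
    rw [cos_angle, hns1, hns2, hip]
    field_simp
  rw [hLHS]
  have hsq : ‖ξ + η‖ ^ 2 = ‖ξ‖ ^ 2 + 2 * ⟪ξ, η⟫ + ‖η‖ ^ 2 := norm_add_sq_real ξ η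
  have htri : ‖ξ + η‖ ≤ ‖ξ‖ + ‖η‖ := norm_add_le ξ η
  have htri2 : ‖ξ‖ - ‖η‖ ≤ ‖ξ + η‖ := by
    have h := norm_sub_le (ξ + η) η
    have he : ξ + η - η = ξ := by abel
    rw [he] at h; linarith
  have htri3 : ‖η‖ - ‖ξ‖ ≤ ‖ξ + η‖ := by
    have h := norm_sub_le (ξ + η) ξ
    have he : ξ + η - ξ = η := by abel
    rw [he] at h; linarith
  set n₁ := ‖ξ‖
  set n₂ := ‖η‖
  set n₃ := ‖ξ + η‖
  set ip := ⟪ξ, η⟫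
  have hn3 : (0:ℝ) ≤ n₃ := norm_nonneg _
  have hT1 : τ + lam ≤ |τ + lam| := le_abs_self _
  have hT2 : -(τ + lam) ≤ |τ + lam| := neg_le_abs _
  set e₁ := |τ + lam| - n₃ with he₁
  set e₂ := -τ + s₁ * n₁ with he₂
  set e₃ := -lam + s₂ * n₂ with he₃
  have hA1 : e₁ ≤ |e₁| := le_abs_self _
  have hA1' : -e₁ ≤ |e₁| := neg_le_abs _
  have hA2 : e₂ ≤ |e₂| := le_abs_self _
  have hA2' : -e₂ ≤ |e₂| := neg_le_abs _
  have hA3 : e₃ ≤ |e₃| := le_abs_self _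
  have hA3' : -e₃ ≤ |e₃| := neg_le_abs _
  set S := |e₁| + |e₂| + |e₃| with hS
  have hS0 : 0 ≤ S := by positivity
  have hrel : s₁ * n₁ + s₂ * n₂ = (τ + lam) + e₂ + e₃ := by rw [he₂, he₃]; ring
  rcases hs₁ with h1 | h1 <;> rcases hs₂ with h2 | h2 <;> subst h1 <;> subst h2
  · have hd : n₁ + n₂ - n₃ ≤ S := by linarith
    have hprod : (n₁ + n₂ - n₃) * (n₁ + n₂ + n₃) ≤ S * (2 * (n₁ + n₂)) :=
      mul_le_mul hd (by linarith) (by linarith) hS0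
    have hexp : (n₁ + n₂ - n₃) * (n₁ + n₂ + n₃) = 2 * (n₁ * n₂) - 2 * ip := by
      rw [show (n₁ + n₂ - n₃) * (n₁ + n₂ + n₃) = (n₁ + n₂) ^ 2 - n₃ ^ 2 by ring, hsq]
      ring
    rw [hexp] at hprod
    nlinarith [hprod]
  · rcases le_total n₁ n₂ with hc | hc
    · have hT3 : |τ + lam| ≤ (n₂ - n₁) + |e₂| + |e₃| :=
        abs_le.mpr ⟨by linarith, by linarith⟩
      have hd' : n₃ - (n₂ - n₁) ≤ S := by linarith
      have hprod : (n₃ - (n₂ - n₁)) * (n₃ + (n₂ - n₁)) ≤ S * (2 * (n₁ + n₂)) :=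
        mul_le_mul hd' (by linarith) (by linarith) hS0
      have hexp' : (n₃ - (n₂ - n₁)) * (n₃ + (n₂ - n₁)) = 2 * ip + 2 * (n₁ * n₂) := by
        rw [show (n₃ - (n₂ - n₁)) * (n₃ + (n₂ - n₁)) = n₃ ^ 2 - (n₁ - n₂) ^ 2 by ring, hsq]
        ring
      rw [hexp'] at hprod
      nlinarith [hprod]
    · have hT3 : |τ + lam| ≤ (n₁ - n₂) + |e₂| + |e₃| :=
        abs_le.mpr ⟨by linarith, by linarith⟩
      have hd : n₃ - (n₁ - n₂) ≤ S := by linarith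
      have hprod : (n₃ - (n₁ - n₂)) * (n₃ + (n₁ - n₂)) ≤ S * (2 * (n₁ + n₂)) :=
        mul_le_mul hd (by linarith) (by linarith) hS0
      have hexp : (n₃ - (n₁ - n₂)) * (n₃ + (n₁ - n₂)) = 2 * ip + 2 * (n₁ * n₂) := by
        rw [show (n₃ - (n₁ - n₂)) * (n₃ + (n₁ - n₂)) = n₃ ^ 2 - (n₁ - n₂) ^ 2 by ring, hsq]
        ring
      rw [hexp] at hprod
      nlinarith [hprod]
  · rcases le_total n₁ n₂ with hc | hc
    · have hT3 : |τ + lam| ≤ (n₂ - n₁) + |e₂| + |e₃| :=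
        abs_le.mpr ⟨by linarith, by linarith⟩
      have hd' : n₃ - (n₂ - n₁) ≤ S := by linarith
      have hprod : (n₃ - (n₂ - n₁)) * (n₃ + (n₂ - n₁)) ≤ S * (2 * (n₁ + n₂)) :=
        mul_le_mul hd' (by linarith) (by linarith) hS0
      have hexp' : (n₃ - (n₂ - n₁)) * (n₃ + (n₂ - n₁)) = 2 * ip + 2 * (n₁ * n₂) := by
        rw [show (n₃ - (n₂ - n₁)) * (n₃ + (n₂ - n₁)) = n₃ ^ 2 - (n₁ - n₂) ^ 2 by ring, hsq]
        ring
      rw [hexp'] at hprod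
      nlinarith [hprod]
    · have hT3 : |τ + lam| ≤ (n₁ - n₂) + |e₂| + |e₃| :=
        abs_le.mpr ⟨by linarith, by linarith⟩
      have hd : n₃ - (n₁ - n₂) ≤ S := by linarith
      have hprod : (n₃ - (n₁ - n₂)) * (n₃ + (n₁ - n₂)) ≤ S * (2 * (n₁ + n₂)) :=
        mul_le_mul hd (by linarith) (by linarith) hS0
      have hexp : (n₃ - (n₁ - n₂)) * (n₃ + (n₁ - n₂)) = 2 * ip + 2 * (n₁ * n₂) := by
        rw [show (n₃ - (n₁ - n₂)) * (n₃ + (n₁ - n₂)) = n₃ ^ 2 - (n₁ - n₂) ^ 2 by ring, hsq]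
        ring
      rw [hexp] at hprod
      nlinarith [hprod]
  · have hd : n₁ + n₂ - n₃ ≤ S := by linarith
    have hprod : (n₁ + n₂ - n₃) * (n₁ + n₂ + n₃) ≤ S * (2 * (n₁ + n₂)) :=
      mul_le_mul hd (by linarith) (by linarith) hS0
    have hexp : (n₁ + n₂ - n₃) * (n₁ + n₂ + n₃) = 2 * (n₁ * n₂) - 2 * ip := by
      rw [show (n₁ + n₂ - n₃) * (n₁ + n₂ + n₃) = (n₁ + n₂) ^ 2 - n₃ ^ 2 by ring, hsq]
      ring
    rw [hexp] at hprod
    nlinarith [hprod]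

/-- Squared angle bound. -/
lemma angle_sq_le (a b : E3) :
    (angle a b) ^ 2 ≤ 8 * (1 - Real.cos (angle a b)) := by
  have h0 := angle_nonneg a b
  have h1 := angle_le_pi a b
  have h2 : Real.cos (angle a b) ≤ 1 - 2 / Real.pi ^ 2 * (angle a b) ^ 2 :=
    Real.cos_le_one_sub_mul_cos_sq (by rw [abs_of_nonneg h0]; exact h1)
  have hpi : Real.pi ≤ 4 := Real.pi_le_four
  have hpi0 : 0 < Real.pi := Real.pi_pos
  have h3 : 2 / Real.pi ^ 2 * (angle a b) ^ 2 ≥ (1/8) * (angle a b) ^ 2 := by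
    have : 2 / Real.pi ^ 2 ≥ 1/8 := by
      rw [ge_iff_le, div_le_div_iff₀ (by norm_num) (by positivity)]
      nlinarith
    nlinarith [sq_nonneg (angle a b)]
  linarith

set_option maxHeartbeats 1000000 in
theorem angle_estimate (α β γ : ℝ)
    (hα : α ∈ Set.Icc (0 : ℝ) (1 / 2)) (hβ : β ∈ Set.Icc (0 : ℝ) (1 / 2))
    (hγ : γ ∈ Set.Icc (0 : ℝ) (1 / 2)) :
    ∃ C : ℝ, 0 < C ∧ ∀ s₁ s₂ : ℝ, (s₁ = 1 ∨ s₁ = -1) → (s₂ = 1 ∨ s₂ = -1) →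
      ∀ (τ lam : ℝ) (ξ η : E3), ξ ≠ 0 → η ≠ 0 →
        angle (s₁ • ξ) (s₂ • η) ≤
          C * ((jbR (|τ + lam| - ‖ξ + η‖) / min (jb ξ) (jb η)) ^ α +
            (jbR (-τ + s₁ * ‖ξ‖) / min (jb ξ) (jb η)) ^ β +
            (jbR (-lam + s₂ * ‖η‖) / min (jb ξ) (jb η)) ^ γ) := by
  obtain ⟨hα0, hα1⟩ := hα
  obtain ⟨hβ0, hβ1⟩ := hβ
  obtain ⟨hγ0, hγ1⟩ := hγ
  refine ⟨100, by norm_num, ?_⟩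
  intro s₁ s₂ hs₁ hs₂ τ lam ξ η hξ hη
  set m := min (jb ξ) (jb η) with hm
  have hm1 : 1 ≤ m := le_min (one_le_jb ξ) (one_le_jb η)
  have hm0 : (0:ℝ) < m := by linarith
  set B₁ := jbR (|τ + lam| - ‖ξ + η‖) with hB₁
  set B₂ := jbR (-τ + s₁ * ‖ξ‖) with hB₂
  set B₃ := jbR (-lam + s₂ * ‖η‖) with hB₃
  have hB₁1 : 1 ≤ B₁ := one_le_jbR _
  have hB₂1 : 1 ≤ B₂ := one_le_jbR _
  have hB₃1 : 1 ≤ B₃ := one_le_jbR _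
  set r₁ := B₁ / m with hr₁
  set r₂ := B₂ / m with hr₂
  set r₃ := B₃ / m with hr₃
  have hr₁0 : 0 < r₁ := div_pos (by linarith) hm0
  have hr₂0 : 0 < r₂ := div_pos (by linarith) hm0
  have hr₃0 : 0 < r₃ := div_pos (by linarith) hm0
  have hp1 : 0 ≤ r₁ ^ α := Real.rpow_nonneg hr₁0.le α
  have hp2 : 0 ≤ r₂ ^ β := Real.rpow_nonneg hr₂0.le β
  have hp3 : 0 ≤ r₃ ^ γ := Real.rpow_nonneg hr₃0.le γ
  set θ := angle (s₁ • ξ) (s₂ • η) with hθ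
  have hθ0 : 0 ≤ θ := angle_nonneg _ _
  have hθpi : θ ≤ Real.pi := angle_le_pi _ _
  by_cases hbig : 1/2 ≤ r₁ ∨ 1/2 ≤ r₂ ∨ 1/2 ≤ r₃
  · have h4 : θ ≤ 4 := le_trans hθpi Real.pi_le_four
    rcases hbig with h | h | h
    · have := half_le_rpow h hα0 hα1; linarith
    · have := half_le_rpow h hβ0 hβ1; linarith
    · have := half_le_rpow h hγ0 hγ1; linarith
  · push_neg at hbig
    obtain ⟨hsm1, hsm2, hsm3⟩ := hbig
    have hm2 : 2 ≤ m := by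
      have h := (div_lt_iff₀ hm0).mp hsm1
      linarith
    have hnξ : m / 2 ≤ ‖ξ‖ := by
      have h1 : m ≤ jb ξ := min_le_left _ _
      have h2 := jb_le ξ
      linarith
    have hnη : m / 2 ≤ ‖η‖ := by
      have h1 : m ≤ jb η := min_le_right _ _
      have h2 := jb_le η
      linarith
    have hnξ0 : (0:ℝ) < ‖ξ‖ := by linarith
    have hnη0 : (0:ℝ) < ‖η‖ := by linarith
    set S := |(|τ + lam| - ‖ξ + η‖)| + |(-τ + s₁ * ‖ξ‖)| + |(-lam + s₂ * ‖η‖)| with hSdef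
    have hS0 : 0 ≤ S := by positivity
    have hSB : S ≤ B₁ + B₂ + B₃ := by
      have u1 := abs_le_jbR (|τ + lam| - ‖ξ + η‖)
      have u2 := abs_le_jbR (-τ + s₁ * ‖ξ‖)
      have u3 := abs_le_jbR (-lam + s₂ * ‖η‖)
      rw [hSdef, hB₁, hB₂, hB₃]
      linarith
    have hkey := key_geom s₁ s₂ hs₁ hs₂ τ lam ξ η hξ hη
    rw [← hSdef, ← hθ] at hkey
    have hcosle : Real.cos θ ≤ 1 := Real.cos_le_one θ
    have t1 : m * ((‖ξ‖ + ‖η‖) * S) ≤ 4 * S * (‖ξ‖ * ‖η‖) := by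
      nlinarith [mul_nonneg (sub_nonneg.mpr (show m ≤ 2 * ‖ξ‖ by linarith))
          (mul_nonneg hS0 hnη0.le),
        mul_nonneg (sub_nonneg.mpr (show m ≤ 2 * ‖η‖ by linarith))
          (mul_nonneg hS0 hnξ0.le)]
    have t2 : m * (‖ξ‖ * ‖η‖ * (1 - Real.cos θ)) ≤ m * ((‖ξ‖ + ‖η‖) * S) :=
      mul_le_mul_of_nonneg_left hkey (by linarith)
    have t3 : ((1 - Real.cos θ) * m) * (‖ξ‖ * ‖η‖) ≤ (4 * S) * (‖ξ‖ * ‖η‖) := by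
      nlinarith [t1, t2]
    have hcos : (1 - Real.cos θ) * m ≤ 4 * S :=
      le_of_mul_le_mul_right t3 (mul_pos hnξ0 hnη0)
    have hθsq : θ ^ 2 ≤ 32 * r₁ + 32 * r₂ + 32 * r₃ := by
      have h1 : θ ^ 2 ≤ 8 * (1 - Real.cos θ) := angle_sq_le _ _
      have h2 : 1 - Real.cos θ ≤ 4 * S / m := by
        rw [le_div_iff₀ hm0]; exact hcos
      have h3 : 4 * S / m ≤ 4 * (B₁ + B₂ + B₃) / m := by
        gcongr
      have h4 : 4 * (B₁ + B₂ + B₃) / m = 4 * r₁ + 4 * r₂ + 4 * r₃ := by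
        rw [hr₁, hr₂, hr₃]; field_simp
      linarith
    have h32 : ∀ r : ℝ, 0 ≤ r → Real.sqrt (32 * r) ≤ 6 * Real.sqrt r := by
      intro r hr
      rw [Real.sqrt_mul (by norm_num) r]
      have hs : Real.sqrt 32 ≤ 6 := by
        nlinarith [Real.sq_sqrt (show (0:ℝ) ≤ 32 by norm_num), Real.sqrt_nonneg (32:ℝ)]
      nlinarith [Real.sqrt_nonneg r]
    have hθle : θ ≤ 6 * Real.sqrt r₁ + 6 * Real.sqrt r₂ + 6 * Real.sqrt r₃ := by
      have h1 : θ = Real.sqrt (θ ^ 2) := (Real.sqrt_sq hθ0).symm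
      have h2 : Real.sqrt (θ ^ 2) ≤ Real.sqrt (32 * r₁ + 32 * r₂ + 32 * r₃) :=
        Real.sqrt_le_sqrt hθsq
      have ha : Real.sqrt (32 * r₁ + 32 * r₂ + 32 * r₃) ≤
          Real.sqrt (32 * r₁ + 32 * r₂) + Real.sqrt (32 * r₃) :=
        my_sqrt_add _ _ (by positivity) (by positivity)
      have hb : Real.sqrt (32 * r₁ + 32 * r₂) ≤ Real.sqrt (32 * r₁) + Real.sqrt (32 * r₂) :=
        my_sqrt_add _ _ (by positivity) (by positivity)
      have c1 := h32 r₁ hr₁0.le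
      have c2 := h32 r₂ hr₂0.le
      have c3 := h32 r₃ hr₃0.le
      linarith
    have hsqp : ∀ r e : ℝ, 0 < r → r < 1/2 → 0 ≤ e → e ≤ 1/2 →
        Real.sqrt r ≤ r ^ e := by
      intro r e hr0 hr1 he0 he1
      rw [Real.sqrt_eq_rpow]
      exact Real.rpow_le_rpow_of_exponent_ge hr0 (by linarith) he1
    have g1 := hsqp r₁ α hr₁0 hsm1 hα0 hα1
    have g2 := hsqp r₂ β hr₂0 hsm2 hβ0 hβ1
    have g3 := hsqp r₃ γ hr₃0 hsm3 hγ0 hγ1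
    linarith
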